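/- Let X be a Banach lattice of measurable functions (quasi-Banach function space) over Ω with the ideal property, and W: Ω → F^{n×n} a matrix weight (a.e. Hermitian positive definite). Then the Köthe dual of the matrix-weighted space X_W equals (X')_{W^{-1}}: a function g lies in the Köthe dual of X_W if and only if |W^{-1}g| ∈ X', and the dual norms agree. -/

import Mathlib

open MeasureTheory ENNReal
open scoped ComplexOrder

variable {𝕜 : Type*} [RCLike 𝕜] [MeasurableSpace 𝕜] [BorelSpace 𝕜] {n : ℕ}
  [MeasurableSpace (EuclideanSpace 𝕜 (Fin n))] [BorelSpace (EuclideanSpace 𝕜 (Fin n))]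
  {Ω : Type*} [MeasurableSpace Ω]

set_option linter.unusedSectionVars false

/-- The Köthe dual (extended-valued) norm of a scalar quasi-Banach function space given by the
extended norm `eN` (with `eN f = ∞` meaning `f ∉ X`):
`‖g‖_{X'} = sup { ∫ |f g| dμ : f measurable, ‖f‖_X ≤ 1 }`. -/
noncomputable def scalarDualNorm (μ : Measure Ω) (eN : (Ω → ℝ) → ℝ≥0∞) (g : Ω → ℝ) : ℝ≥0∞ :=
  ⨆ f ∈ {f : Ω → ℝ | Measurable f ∧ eN f ≤ 1}, ∫⁻ x, ‖f x * g x‖₊ ∂μ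

/-- The extended norm of the matrix-weighted space `X_W`: `‖f‖_{X_W} = ‖ |W f| ‖_X`. -/
noncomputable def matrixWeightedNorm (eN : (Ω → ℝ) → ℝ≥0∞)
    (W : Ω → Matrix (Fin n) (Fin n) 𝕜) (f : Ω → EuclideanSpace 𝕜 (Fin n)) : ℝ≥0∞ :=
  eN fun x => ‖Matrix.toEuclideanLin (W x) (f x)‖

/-- The Köthe dual (extended-valued) norm of the `𝔽ⁿ`-directional space `X_W`:
`‖g‖_{(X_W)'} = sup { ∫ |f·g| dμ : f measurable, ‖f‖_{X_W} ≤ 1 }`. -/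
noncomputable def vectorDualNorm (μ : Measure Ω) (eN : (Ω → ℝ) → ℝ≥0∞)
    (W : Ω → Matrix (Fin n) (Fin n) 𝕜) (g : Ω → EuclideanSpace 𝕜 (Fin n)) : ℝ≥0∞ :=
  ⨆ f ∈ {f : Ω → EuclideanSpace 𝕜 (Fin n) | Measurable f ∧ matrixWeightedNorm eN W f ≤ 1},
    ∫⁻ x, (‖(inner 𝕜 (f x) (g x) : 𝕜)‖₊ : ℝ≥0∞) ∂μ


section Aux

lemma stmt5_cancel {A : Matrix (Fin n) (Fin n) 𝕜} (hA : A.PosDef) (v : EuclideanSpace 𝕜 (Fin n)) :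
    Matrix.toEuclideanLin A (Matrix.toEuclideanLin A⁻¹ v) = v := by
  have hdet : IsUnit A.det := (Matrix.isUnit_iff_isUnit_det A).mp hA.isUnit
  rw [Matrix.toEuclideanLin_apply, Matrix.toEuclideanLin_apply]
  simp [Matrix.mulVec_mulVec, Matrix.mul_nonsing_inv A hdet]

lemma stmt5_inner_eq {A : Matrix (Fin n) (Fin n) 𝕜} (hA : A.PosDef)
    (u v : EuclideanSpace 𝕜 (Fin n)) :
    (inner 𝕜 u v : 𝕜) = inner 𝕜 (Matrix.toEuclideanLin A u) (Matrix.toEuclideanLin A⁻¹ v) := by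
  have h1 : LinearMap.adjoint (Matrix.toEuclideanLin A) = Matrix.toEuclideanLin A := by
    rw [← Matrix.toEuclideanLin_conjTranspose_eq_adjoint, hA.isHermitian]
  calc (inner 𝕜 u v : 𝕜) = inner 𝕜 u (Matrix.toEuclideanLin A (Matrix.toEuclideanLin A⁻¹ v)) := by
        rw [stmt5_cancel hA]
    _ = inner 𝕜 (LinearMap.adjoint (Matrix.toEuclideanLin A) u) (Matrix.toEuclideanLin A⁻¹ v) := by
        rw [LinearMap.adjoint_inner_left]
    _ = _ := by rw [h1]

lemma stmt5_inner_TT {A : Matrix (Fin n) (Fin n) 𝕜} (hA : A.PosDef)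
    (v : EuclideanSpace 𝕜 (Fin n)) :
    (inner 𝕜 (Matrix.toEuclideanLin A⁻¹ (Matrix.toEuclideanLin A⁻¹ v)) v : 𝕜)
      = (‖Matrix.toEuclideanLin A⁻¹ v‖ : 𝕜) ^ 2 := by
  have h1 : LinearMap.adjoint (Matrix.toEuclideanLin A⁻¹) = Matrix.toEuclideanLin A⁻¹ := by
    rw [← Matrix.toEuclideanLin_conjTranspose_eq_adjoint, hA.inv.isHermitian]
  calc (inner 𝕜 (Matrix.toEuclideanLin A⁻¹ (Matrix.toEuclideanLin A⁻¹ v)) v : 𝕜)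
      = inner 𝕜 (Matrix.toEuclideanLin A⁻¹ v) (Matrix.toEuclideanLin A⁻¹ v) := by
        conv_lhs => rw [← h1]
        rw [LinearMap.adjoint_inner_left, h1]
    _ = (‖Matrix.toEuclideanLin A⁻¹ v‖ : 𝕜) ^ 2 := by
        rw [inner_self_eq_norm_sq_to_K]

instance stmt5_matMeas : MeasurableSpace (Matrix (Fin n) (Fin n) 𝕜) :=
  inferInstanceAs (MeasurableSpace (Fin n → Fin n → 𝕜))
instance stmt5_matBorel : BorelSpace (Matrix (Fin n) (Fin n) 𝕜) :=
  inferInstanceAs (BorelSpace (Fin n → Fin n → 𝕜))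

noncomputable def stmt5E (𝕜 : Type*) [RCLike 𝕜] [MeasurableSpace 𝕜] [BorelSpace 𝕜] (n : ℕ)
    [MeasurableSpace (EuclideanSpace 𝕜 (Fin n))] [BorelSpace (EuclideanSpace 𝕜 (Fin n))] :
    EuclideanSpace 𝕜 (Fin n) ≃ᵐ (Fin n → 𝕜) :=
  (PiLp.continuousLinearEquiv 2 𝕜 (fun _ : Fin n => 𝕜)).toHomeomorph.toMeasurableEquiv

lemma stmt5_meas_coord {f : Ω → EuclideanSpace 𝕜 (Fin n)} (hf : Measurable f) (i : Fin n) :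
    Measurable fun x => f x i :=
  ((measurable_pi_apply i).comp' (stmt5E 𝕜 n).measurable).comp' hf

lemma stmt5_meas_of_coords {f : Ω → Fin n → 𝕜} (hf : ∀ i, Measurable fun x => f x i) :
    Measurable fun x => ((WithLp.equiv 2 (Fin n → 𝕜)).symm (f x) : EuclideanSpace 𝕜 (Fin n)) :=
  (stmt5E 𝕜 n).symm.measurable.comp' (measurable_pi_lambda _ hf)

lemma stmt5_meas_matrix {W : Ω → Matrix (Fin n) (Fin n) 𝕜}
    (hW : ∀ i j, Measurable fun x => W x i j) : Measurable W :=
  measurable_pi_lambda _ fun i => measurable_pi_lambda _ fun j => hW i j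

lemma stmt5_meas_inv_entries {W : Ω → Matrix (Fin n) (Fin n) 𝕜}
    (hW : ∀ i j, Measurable fun x => W x i j) (i j : Fin n) :
    Measurable fun x => (W x)⁻¹ i j := by
  have hdet : Measurable fun x => (W x).det :=
    (continuous_id.matrix_det).measurable.comp (stmt5_meas_matrix hW)
  have hadj : Measurable fun x => (W x).adjugate i j :=
    ((continuous_id.matrix_adjugate.matrix_elem i j).measurable.comp (stmt5_meas_matrix hW))
  simp only [Matrix.inv_def, Matrix.smul_apply, Ring.inverse_eq_inv', smul_eq_mul]
  exact hdet.inv.mul hadj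

lemma stmt5_meas_apply {A : Ω → Matrix (Fin n) (Fin n) 𝕜}
    (hA : ∀ i j, Measurable fun x => A x i j)
    {f : Ω → EuclideanSpace 𝕜 (Fin n)} (hf : Measurable f) :
    Measurable fun x => Matrix.toEuclideanLin (A x) (f x) := by
  simp only [Matrix.toEuclideanLin_apply]
  exact stmt5_meas_of_coords fun i => by
    simpa [Matrix.mulVec, dotProduct] using
      Finset.measurable_sum Finset.univ fun j _ => (hA i j).mul (stmt5_meas_coord hf j)

end Aux

theorem stmt5 (μ : Measure Ω) [SigmaFinite μ] (eN : (Ω → ℝ) → ℝ≥0∞)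
    (hideal : ∀ f g : Ω → ℝ, (∀ᵐ x ∂μ, |g x| ≤ |f x|) → eN g ≤ eN f)
    (hhomog : ∀ (c : ℝ) (f : Ω → ℝ), eN (fun x => c * f x) = ‖c‖₊ * eN f)
    (W : Ω → Matrix (Fin n) (Fin n) 𝕜) (hWmeas : ∀ i j, Measurable fun x => W x i j)
    (hW : ∀ᵐ x ∂μ, (W x).PosDef)
    (g : Ω → EuclideanSpace 𝕜 (Fin n)) (hg : Measurable g) :
    vectorDualNorm μ eN W g =
      scalarDualNorm μ eN fun x => ‖Matrix.toEuclideanLin (W x)⁻¹ (g x)‖ := by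
  have hinv : ∀ i j, Measurable fun x => (W x)⁻¹ i j := stmt5_meas_inv_entries hWmeas
  have hTg : Measurable fun x => Matrix.toEuclideanLin (W x)⁻¹ (g x) := stmt5_meas_apply hinv hg
  refine le_antisymm (iSup₂_le fun f hf => ?_) (iSup₂_le fun F hF => ?_)
  · obtain ⟨hfm, hf1⟩ := hf
    have hFm : Measurable fun x => ‖Matrix.toEuclideanLin (W x) (f x)‖ :=
      (stmt5_meas_apply hWmeas hfm).norm
    refine le_iSup₂_of_le (fun x => ‖Matrix.toEuclideanLin (W x) (f x)‖) ⟨hFm, hf1⟩ ?_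
    refine lintegral_mono_ae ?_
    filter_upwards [hW] with x hx
    refine ENNReal.coe_le_coe.mpr ?_
    rw [← NNReal.coe_le_coe, coe_nnnorm, coe_nnnorm]
    have h1 : ‖(inner 𝕜 (f x) (g x) : 𝕜)‖ ≤
        ‖Matrix.toEuclideanLin (W x) (f x)‖ * ‖Matrix.toEuclideanLin (W x)⁻¹ (g x)‖ := by
      rw [stmt5_inner_eq hx]
      exact norm_inner_le_norm _ _
    calc ‖(inner 𝕜 (f x) (g x) : 𝕜)‖ ≤ _ := h1
      _ ≤ ‖‖Matrix.toEuclideanLin (W x) (f x)‖ * ‖Matrix.toEuclideanLin (W x)⁻¹ (g x)‖‖ :=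
        le_abs_self _
  · obtain ⟨hFm, hF1⟩ := hF
    set c : Ω → ℝ := fun x => |F x| * ‖Matrix.toEuclideanLin (W x)⁻¹ (g x)‖⁻¹ with hc_def
    have hcm : Measurable c := hFm.abs.mul hTg.norm.inv
    set fv : Ω → EuclideanSpace 𝕜 (Fin n) := fun x =>
      c x • Matrix.toEuclideanLin (W x)⁻¹ (Matrix.toEuclideanLin (W x)⁻¹ (g x)) with hfv_def
    have hfvm : Measurable fv := hcm.smul (stmt5_meas_apply hinv hTg)
    have hmem : matrixWeightedNorm eN W fv ≤ 1 := by
      refine le_trans (hideal F _ ?_) hF1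
      filter_upwards [hW] with x hx
      have h2 : Matrix.toEuclideanLin (W x) (fv x)
          = c x • Matrix.toEuclideanLin (W x)⁻¹ (g x) := by
        simp only [hfv_def]
        rw [LinearMap.map_smul_of_tower, stmt5_cancel hx]
      have h3 : ‖Matrix.toEuclideanLin (W x)⁻¹ (g x)‖⁻¹ *
          ‖Matrix.toEuclideanLin (W x)⁻¹ (g x)‖ ≤ 1 := by
        rcases eq_or_ne ‖Matrix.toEuclideanLin (W x)⁻¹ (g x)‖ 0 with h | h
        · simp [h]
        · rw [inv_mul_cancel₀ h]
      calc |‖Matrix.toEuclideanLin (W x) (fv x)‖|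
          = ‖Matrix.toEuclideanLin (W x) (fv x)‖ := abs_norm _
        _ = |c x| * ‖Matrix.toEuclideanLin (W x)⁻¹ (g x)‖ := by rw [h2, norm_smul, Real.norm_eq_abs]
        _ = |F x| * (‖Matrix.toEuclideanLin (W x)⁻¹ (g x)‖⁻¹ *
            ‖Matrix.toEuclideanLin (W x)⁻¹ (g x)‖) := by
            rw [hc_def, abs_mul, abs_abs, abs_of_nonneg (by positivity : (0:ℝ) ≤ ‖Matrix.toEuclideanLin (W x)⁻¹ (g x)‖⁻¹), mul_assoc]
        _ ≤ |F x| * 1 := by gcongr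
        _ = |F x| := mul_one _
    refine le_iSup₂_of_le fv ⟨hfvm, hmem⟩ ?_
    refine lintegral_mono_ae ?_
    filter_upwards [hW] with x hx
    refine ENNReal.coe_le_coe.mpr ?_
    rw [← NNReal.coe_le_coe, coe_nnnorm, coe_nnnorm]
    have h4 : (inner 𝕜 (fv x) (g x) : 𝕜)
        = (c x : 𝕜) * (‖Matrix.toEuclideanLin (W x)⁻¹ (g x)‖ : 𝕜) ^ 2 := by
      show (inner 𝕜 (c x • Matrix.toEuclideanLin (W x)⁻¹ (Matrix.toEuclideanLin (W x)⁻¹ (g x))) (g x) : 𝕜) = _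
      rw [RCLike.real_smul_eq_coe_smul (K := 𝕜), inner_smul_left, stmt5_inner_TT hx,
        RCLike.conj_ofReal]
    have hnorm : ‖(inner 𝕜 (fv x) (g x) : 𝕜)‖
        = |c x| * ‖Matrix.toEuclideanLin (W x)⁻¹ (g x)‖ ^ 2 := by
      rw [h4, norm_mul, norm_pow, RCLike.norm_ofReal, RCLike.norm_ofReal, abs_norm]
    have hlhs : ‖F x * ‖Matrix.toEuclideanLin (W x)⁻¹ (g x)‖‖
        = |F x| * ‖Matrix.toEuclideanLin (W x)⁻¹ (g x)‖ := by
      rw [Real.norm_eq_abs, abs_mul, abs_norm]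
    rw [hlhs, hnorm, hc_def]
    rcases eq_or_ne ‖Matrix.toEuclideanLin (W x)⁻¹ (g x)‖ 0 with h | h
    · simp [h]
    · rw [abs_mul, abs_abs, abs_of_nonneg
        (by positivity : (0:ℝ) ≤ ‖Matrix.toEuclideanLin (W x)⁻¹ (g x)‖⁻¹), pow_two,
        mul_assoc, ← mul_assoc (‖Matrix.toEuclideanLin (W x)⁻¹ (g x)‖⁻¹),
        inv_mul_cancel₀ h, one_mul]
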